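/- arXiv:1702.01673 — 2 statements merged into one kernel-verified Lean document; each statement's English description precedes it below -/
import Mathlib

section
/- Let η be a Borel probability measure on ℝ² with marginals μ and ν. Suppose there exist sequences {z_n}, {w_n} ⊂ ℂ⁺ such that lim_{n→∞} √(Im z_n · Im w_n) · |G_η(z_n, w_n)| = +∞. Then at least one of the sequences {G_μ(z_n)}_n and {G_ν(w_n)}_n is unbounded; in particular, at least one of the Cauchy transforms G_μ, G_ν is unbounded on ℂ⁺. -/
open MeasureTheory Complex Filter Topology

/-- The (one-variable) Cauchy transform of a measure on `ℝ`,
`G_μ(z) = ∫ 1/(z - t) dμ(t)`. -/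
noncomputable def cauchyTransform (μ : Measure ℝ) (z : ℂ) : ℂ :=
  ∫ t, (z - (t : ℂ))⁻¹ ∂μ

/-- The two-variable Cauchy transform of a measure on `ℝ²`,
`G_η(z, w) = ∫ 1/((z - t)(w - s)) dη(t, s)`. -/
noncomputable def cauchyTransform2 (η : Measure (ℝ × ℝ)) (z w : ℂ) : ℂ :=
  ∫ p, ((z - (p.1 : ℂ)) * (w - (p.2 : ℂ)))⁻¹ ∂η

private lemma sub_ne_zero_of_im {z : ℂ} (hz : 0 < z.im) (t : ℝ) : z - (t : ℂ) ≠ 0 := by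
  intro h
  have : (z - (t : ℂ)).im = 0 := by rw [h]; simp
  simp [Complex.sub_im, Complex.ofReal_im] at this
  linarith

private lemma cont_inv {z : ℂ} (hz : 0 < z.im) :
    Continuous fun t : ℝ => (z - (t : ℂ))⁻¹ := by
  refine Continuous.inv₀ (by continuity) (fun t => sub_ne_zero_of_im hz t)

private lemma norm_inv_le {z : ℂ} (hz : 0 < z.im) (t : ℝ) :
    ‖(z - (t : ℂ))⁻¹‖ ≤ z.im⁻¹ := by
  rw [norm_inv]
  refine inv_anti₀ hz ?_
  calc z.im = |(z - (t : ℂ)).im| := by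
        rw [Complex.sub_im, Complex.ofReal_im, sub_zero, abs_of_pos hz]
    _ ≤ ‖z - (t : ℂ)‖ := Complex.abs_im_le_norm _

/-- Energy bound: `Im z · ∫ |z - t|⁻² dμ ≤ ‖G_μ(z)‖` where `μ` is a marginal of `η`. -/
private lemma energy_le (η : Measure (ℝ × ℝ)) [IsProbabilityMeasure η] {z : ℂ}
    (hz : 0 < z.im) {φ : ℝ × ℝ → ℝ} (hφ : Measurable φ) :
    z.im * ∫ p, ‖(z - (φ p : ℂ))⁻¹‖ ^ 2 ∂η ≤ ‖cauchyTransform (η.map φ) z‖ := by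
  have hmeas : AEStronglyMeasurable (fun p => (z - (φ p : ℂ))⁻¹) η :=
    ((cont_inv hz).measurable.comp hφ).aestronglyMeasurable
  have hint : Integrable (fun p => (z - (φ p : ℂ))⁻¹) η := by
    refine (integrable_const (z.im⁻¹)).mono' hmeas ?_
    filter_upwards with p
    simpa using norm_inv_le hz (φ p)
  have hG : cauchyTransform (η.map φ) z = ∫ p, (z - (φ p : ℂ))⁻¹ ∂η := by
    rw [cauchyTransform, integral_map hφ.aemeasurable (cont_inv hz).aestronglyMeasurable]
  have him : ∀ t : ℝ, ((z - (t : ℂ))⁻¹).im = -(z.im * ‖(z - (t : ℂ))⁻¹‖ ^ 2) := by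
    intro t
    have hsq : ‖(z - (t : ℂ))⁻¹‖ ^ 2 = (Complex.normSq (z - (t : ℂ)))⁻¹ := by
      rw [Complex.sq_norm, Complex.normSq_inv]
    rw [hsq, Complex.inv_im, Complex.sub_im, Complex.ofReal_im, sub_zero,
      div_eq_mul_inv, neg_mul]
  have h3 : (∫ p, (z - (φ p : ℂ))⁻¹ ∂η).im = ∫ p, ((z - (φ p : ℂ))⁻¹).im ∂η :=
    (integral_im hint).symm
  have key : z.im * ∫ p, ‖(z - (φ p : ℂ))⁻¹‖ ^ 2 ∂η = -(cauchyTransform (η.map φ) z).im := by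
    rw [hG, h3, ← integral_const_mul, ← integral_neg]
    refine integral_congr_ae (Filter.Eventually.of_forall fun p => ?_)
    show z.im * ‖(z - (φ p : ℂ))⁻¹‖ ^ 2 = -((z - (φ p : ℂ))⁻¹).im
    rw [him (φ p), neg_neg]
  rw [key]
  calc -(cauchyTransform (η.map φ) z).im ≤ |(cauchyTransform (η.map φ) z).im| := neg_le_abs _
    _ ≤ ‖cauchyTransform (η.map φ) z‖ := Complex.abs_im_le_norm _
    _ = ‖cauchyTransform (η.map φ) z‖ := rfl

private lemma memL2 (η : Measure (ℝ × ℝ)) [IsProbabilityMeasure η] {z : ℂ}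
    (hz : 0 < z.im) {φ : ℝ × ℝ → ℝ} (hφ : Measurable φ) :
    MemLp (fun p => ‖(z - (φ p : ℂ))⁻¹‖) (ENNReal.ofReal 2) η := by
  have hmeas : AEStronglyMeasurable (fun p => ‖(z - (φ p : ℂ))⁻¹‖) η :=
    ((cont_inv hz).measurable.comp hφ).norm.aestronglyMeasurable
  have htop : MemLp (fun p => ‖(z - (φ p : ℂ))⁻¹‖) ⊤ η := by
    refine memLp_top_of_bound hmeas (z.im⁻¹) ?_
    filter_upwards with p
    simpa using norm_inv_le hz (φ p)
  exact htop.mono_exponent le_top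

/-- The key inequality: `(√(Im z · Im w) · |G_η(z,w)|)² ≤ ‖G_μ(z)‖ · ‖G_ν(w)‖`. -/
private lemma key_ineq (η : Measure (ℝ × ℝ)) [IsProbabilityMeasure η] {z w : ℂ}
    (hz : 0 < z.im) (hw : 0 < w.im) :
    (Real.sqrt (z.im * w.im) * ‖cauchyTransform2 η z w‖) ^ 2 ≤
      ‖cauchyTransform (η.map Prod.fst) z‖ * ‖cauchyTransform (η.map Prod.snd) w‖ := by
  set f : ℝ × ℝ → ℝ := fun p => ‖(z - (p.1 : ℂ))⁻¹‖ with hf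
  set g : ℝ × ℝ → ℝ := fun p => ‖(w - (p.2 : ℂ))⁻¹‖ with hg
  have hfg : ‖cauchyTransform2 η z w‖ ≤ ∫ p, f p * g p ∂η := by
    rw [show (‖cauchyTransform2 η z w‖ : ℝ) = ‖cauchyTransform2 η z w‖ from rfl,
      cauchyTransform2]
    refine (norm_integral_le_integral_norm _).trans_eq ?_
    refine integral_congr_ae (Filter.Eventually.of_forall fun p => ?_)
    show ‖((z - (p.1 : ℂ)) * (w - (p.2 : ℂ)))⁻¹‖ = f p * g p
    rw [mul_inv, norm_mul]
  have hpq : (2 : ℝ).HolderConjugate 2 := Real.HolderConjugate.two_two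
  have hCS : ∫ p, f p * g p ∂η ≤
      (∫ p, f p ^ (2 : ℝ) ∂η) ^ ((1 : ℝ) / 2) * (∫ p, g p ^ (2 : ℝ) ∂η) ^ ((1 : ℝ) / 2) :=
    integral_mul_le_Lp_mul_Lq_of_nonneg hpq
      (Filter.Eventually.of_forall fun p => norm_nonneg _)
      (Filter.Eventually.of_forall fun p => norm_nonneg _)
      (memL2 η hz measurable_fst) (memL2 η hw measurable_snd)
  have hrpow : ∀ x : ℝ, 0 ≤ x → x ^ (2 : ℝ) = x ^ 2 := fun x hx => by
    rw [← Real.rpow_natCast x 2]; norm_num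
  have hF2 : (∫ p, f p ^ (2 : ℝ) ∂η) = ∫ p, f p ^ 2 ∂η :=
    integral_congr_ae (Filter.Eventually.of_forall fun p => hrpow _ (norm_nonneg _))
  have hG2 : (∫ p, g p ^ (2 : ℝ) ∂η) = ∫ p, g p ^ 2 ∂η :=
    integral_congr_ae (Filter.Eventually.of_forall fun p => hrpow _ (norm_nonneg _))
  set F := ∫ p, f p ^ 2 ∂η with hFdef
  set G := ∫ p, g p ^ 2 ∂η with hGdef
  have hFnn : 0 ≤ F := integral_nonneg fun p => sq_nonneg _
  have hGnn : 0 ≤ G := integral_nonneg fun p => sq_nonneg _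
  have habs2 : ‖cauchyTransform2 η z w‖ ^ 2 ≤ F * G := by
    have h1 : ‖cauchyTransform2 η z w‖ ≤ F ^ ((1 : ℝ) / 2) * G ^ ((1 : ℝ) / 2) := by
      refine hfg.trans (hCS.trans_eq ?_)
      rw [hF2, hG2]
    have h2 : (F ^ ((1 : ℝ) / 2) * G ^ ((1 : ℝ) / 2)) ^ 2 = F * G := by
      rw [mul_pow, ← Real.rpow_natCast (F ^ ((1:ℝ)/2)) 2, ← Real.rpow_natCast (G ^ ((1:ℝ)/2)) 2,
        ← Real.rpow_mul hFnn, ← Real.rpow_mul hGnn]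
      norm_num
    calc ‖cauchyTransform2 η z w‖ ^ 2
        ≤ (F ^ ((1 : ℝ) / 2) * G ^ ((1 : ℝ) / 2)) ^ 2 := by
          refine pow_le_pow_left₀ (norm_nonneg _) h1 2
      _ = F * G := h2
  have hsqrt : Real.sqrt (z.im * w.im) ^ 2 = z.im * w.im :=
    Real.sq_sqrt (mul_nonneg hz.le hw.le)
  calc (Real.sqrt (z.im * w.im) * ‖cauchyTransform2 η z w‖) ^ 2
      = (z.im * w.im) * ‖cauchyTransform2 η z w‖ ^ 2 := by
        rw [mul_pow, hsqrt]
    _ ≤ (z.im * w.im) * (F * G) := by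
        refine mul_le_mul_of_nonneg_left habs2 (mul_nonneg hz.le hw.le)
    _ = (z.im * F) * (w.im * G) := by ring
    _ ≤ ‖cauchyTransform (η.map Prod.fst) z‖ * ‖cauchyTransform (η.map Prod.snd) w‖ := by
        refine mul_le_mul (energy_le η hz measurable_fst) (energy_le η hw measurable_snd)
          (mul_nonneg hw.le hGnn) (norm_nonneg _)

theorem stmt10 (η : Measure (ℝ × ℝ)) [IsProbabilityMeasure η]
    (z w : ℕ → ℂ) (hz : ∀ n, 0 < (z n).im) (hw : ∀ n, 0 < (w n).im)
    (hlim : Tendsto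
      (fun n => Real.sqrt ((z n).im * (w n).im) * ‖cauchyTransform2 η (z n) (w n)‖)
      atTop atTop) :
    (¬ Bornology.IsBounded (Set.range fun n => cauchyTransform (η.map Prod.fst) (z n)) ∨
     ¬ Bornology.IsBounded (Set.range fun n => cauchyTransform (η.map Prod.snd) (w n))) ∧
    (¬ Bornology.IsBounded (cauchyTransform (η.map Prod.fst) '' {z : ℂ | 0 < z.im}) ∨
     ¬ Bornology.IsBounded (cauchyTransform (η.map Prod.snd) '' {z : ℂ | 0 < z.im})) := by
  have main : ¬ Bornology.IsBounded (Set.range fun n => cauchyTransform (η.map Prod.fst) (z n)) ∨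
      ¬ Bornology.IsBounded (Set.range fun n => cauchyTransform (η.map Prod.snd) (w n)) := by
    by_contra h
    push_neg at h
    obtain ⟨h1, h2⟩ := h
    obtain ⟨C1, hC1⟩ := isBounded_iff_forall_norm_le.mp h1
    obtain ⟨C2, hC2⟩ := isBounded_iff_forall_norm_le.mp h2
    have hb1 : ∀ n, ‖cauchyTransform (η.map Prod.fst) (z n)‖ ≤ C1 :=
      fun n => hC1 _ ⟨n, rfl⟩
    have hb2 : ∀ n, ‖cauchyTransform (η.map Prod.snd) (w n)‖ ≤ C2 :=
      fun n => hC2 _ ⟨n, rfl⟩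
    have hsq : Tendsto (fun n =>
        (Real.sqrt ((z n).im * (w n).im) * ‖cauchyTransform2 η (z n) (w n)‖) ^ 2)
        atTop atTop := by
      have := hlim.atTop_mul_atTop₀ hlim
      refine this.congr fun n => (sq _).symm
    obtain ⟨n, hn⟩ := (hsq.eventually_gt_atTop (C1 * C2)).exists
    have hle : (Real.sqrt ((z n).im * (w n).im) *
        ‖cauchyTransform2 η (z n) (w n)‖) ^ 2 ≤ C1 * C2 := by
      refine (key_ineq η (hz n) (hw n)).trans ?_
      exact mul_le_mul (hb1 n) (hb2 n) (norm_nonneg _) ((norm_nonneg _).trans (hb1 n))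
    exact absurd hle (not_le.mpr hn)
  refine ⟨main, ?_⟩
  rcases main with h | h
  · left
    intro hbd
    exact h (hbd.subset (by rintro _ ⟨n, rfl⟩; exact ⟨z n, hz n, rfl⟩))
  · right
    intro hbd
    exact h (hbd.subset (by rintro _ ⟨n, rfl⟩; exact ⟨w n, hw n, rfl⟩))
end

section
/- Let η₁, η₂, η be Borel probability measures on ℝ², with marginals μⱼ, νⱼ of ηⱼ (j = 1, 2) and μ, ν of η. Let ξ, ζ, ξ₁, ξ₂, ζ₁, ζ₂ ∈ ℝ with ξ₁ + ξ₂ = ξ and ζ₁ + ζ₂ = ζ, and assume η({(ξ,ζ)}) > 0, μⱼ({ξⱼ}) > 0 and νⱼ({ζⱼ}) > 0 for j = 1, 2. Let ω_{a₁}, ω_{a₂}, ω_{b₁}, ω_{b₂} : ℂ⁺ → ℂ⁺ be functions such that: (i) lim_{y↓0} (ω_{aⱼ}(ξ + iy) − ξⱼ)/(iy) = μⱼ({ξⱼ})/μ({ξ}) and lim_{y↓0} (ω_{bⱼ}(ζ + iy) − ζⱼ)/(iy) = νⱼ({ζⱼ})/ν({ζ}) for j = 1, 2 (limits in ℂ);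 (ii) for all sufficiently small y > 0, G_η(ξ+iy, ζ+iy) ≠ 0, G_{ηⱼ}(ω_{aⱼ}(ξ+iy), ω_{bⱼ}(ζ+iy)) ≠ 0 for j = 1,2, and 1/G_{η₁}(ω_{a₁}(ξ+iy), ω_{b₁}(ζ+iy)) + 1/G_{η₂}(ω_{a₂}(ξ+iy), ω_{b₂}(ζ+iy)) = 1/(G_μ(ξ+iy)·G_ν(ζ+iy)) + 1/G_η(ξ+iy, ζ+iy); (iii) for all z, w ∈ ℂ⁺ and j = 1, 2: (Im ω_{aⱼ}(z))·(Im ω_{bⱼ}(w))·|G_{ηⱼ}(ω_{aⱼ}(z), ω_{bⱼ}(w))|² ≥ (Im z)·(Im w)·|G_η(z,w)|². Then ηⱼ({(ξⱼ, ζⱼ)}) > 0 for j = 1, 2, and 1 + μ({ξ})·ν({ζ})/η({(ξ,ζ)}) = μ₁({ξ₁})·ν₁({ζ₁})/η₁({(ξ₁,ζ₁)}) + μ₂({ξ₂})·ν₂({ζ₂})/η₂({(ξ₂,ζ₂)}). -/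
open MeasureTheory Complex Filter Topology

-- basic: for t real, Im z ≤ |z - t| and z - t ≠ 0 when Im z > 0
lemma im_le_abs_sub (z : ℂ) (t : ℝ) : z.im ≤ ‖z - t‖ := by
  have h1 : (z - (t:ℂ)).im = z.im := by simp
  calc z.im ≤ |(z - (t:ℂ)).im| := by rw [h1]; exact le_abs_self _
    _ ≤ ‖z - t‖ := Complex.abs_im_le_norm _

lemma sub_real_ne_zero {z : ℂ} (hz : 0 < z.im) (t : ℝ) : z - (t:ℂ) ≠ 0 := by
  intro h
  have : (z - (t:ℂ)).im = 0 := by rw [h]; simp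
  simp at this
  linarith


lemma aux_ct2 (η : Measure (ℝ × ℝ)) [IsFiniteMeasure η]
    {l : Filter ℝ} [l.IsCountablyGenerated] [l.NeBot]
    (z w : ℝ → ℂ) (x₀ y₀ : ℝ) (K₁ K₂ : ℝ)
    (hz : ∀ᶠ y : ℝ in l, 0 < (z y).im ∧ ‖z y - x₀‖ ≤ K₁ * (z y).im)
    (hw : ∀ᶠ y : ℝ in l, 0 < (w y).im ∧ ‖w y - y₀‖ ≤ K₂ * (w y).im)
    (hzt : Tendsto z l (𝓝 (x₀ : ℂ))) (hwt : Tendsto w l (𝓝 (y₀ : ℂ))) :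
    Tendsto (fun y => (z y - x₀) * (w y - y₀) * cauchyTransform2 η (z y) (w y)) l
      (𝓝 ((η ({(x₀, y₀)} : Set (ℝ × ℝ))).toReal : ℂ)) := by
  -- rewrite as an integral
  have key : ∀ y, (z y - x₀) * (w y - y₀) * cauchyTransform2 η (z y) (w y)
      = ∫ p, (z y - x₀) * (w y - y₀) * ((z y - (p.1:ℂ)) * (w y - (p.2:ℂ)))⁻¹ ∂η := by
    intro y
    rw [cauchyTransform2, ← integral_const_mul]
  have keyv : ((η ({(x₀, y₀)} : Set (ℝ × ℝ))).toReal : ℂ)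
      = ∫ p : ℝ × ℝ, Set.indicator ({(x₀,y₀)} : Set (ℝ × ℝ)) (fun _ => (1:ℂ)) p ∂η := by
    rw [integral_indicator_const (1:ℂ) (measurableSet_singleton _)]
    simp [Measure.real]
  simp only [key]
  rw [keyv]
  apply tendsto_integral_filter_of_dominated_convergence (fun _ => K₁ * K₂)
  · -- a.e. strong measurability
    filter_upwards [hz, hw] with y hy hwy
    apply AEStronglyMeasurable.const_mul
    apply Continuous.aestronglyMeasurable
    apply Continuous.inv₀
    · fun_prop
    · intro p
      exact mul_ne_zero (sub_real_ne_zero hy.1 p.1) (sub_real_ne_zero hwy.1 p.2)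
  · -- bound
    filter_upwards [hz, hw] with y hy hwy
    filter_upwards with p
    have h1 : 0 < ‖z y - p.1‖ := norm_pos_iff.mpr (sub_real_ne_zero hy.1 p.1)
    have h2 : 0 < ‖w y - p.2‖ := norm_pos_iff.mpr (sub_real_ne_zero hwy.1 p.2)
    have hK1 : 0 ≤ K₁ := by
      nlinarith [norm_nonneg (z y - x₀), hy.1, hy.2]
    have hK2 : 0 ≤ K₂ := by
      nlinarith [norm_nonneg (w y - y₀), hwy.1, hwy.2]
    have hb1 : ‖z y - x₀‖ ≤ K₁ * ‖z y - p.1‖ := by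
      refine hy.2.trans ?_
      have := im_le_abs_sub (z y) p.1
      nlinarith
    have hb2 : ‖w y - y₀‖ ≤ K₂ * ‖w y - p.2‖ := by
      refine hwy.2.trans ?_
      have := im_le_abs_sub (w y) p.2
      nlinarith
    have : ‖(z y - ↑x₀) * (w y - ↑y₀) * ((z y - (p.1:ℂ)) * (w y - (p.2:ℂ)))⁻¹‖
        = (‖z y - x₀‖ * ‖w y - y₀‖) /
          (‖z y - p.1‖ * ‖w y - p.2‖) := by
      simp [map_mul, map_inv₀, div_eq_mul_inv]
    rw [this, div_le_iff₀ (mul_pos h1 h2)]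
    calc ‖z y - ↑x₀‖ * ‖w y - ↑y₀‖
        ≤ (K₁ * ‖z y - p.1‖) * (K₂ * ‖w y - p.2‖) := by
          exact mul_le_mul hb1 hb2 (norm_nonneg _) (mul_nonneg hK1 (norm_nonneg _))
      _ = K₁ * K₂ * (‖z y - ↑p.1‖ * ‖w y - ↑p.2‖) := by ring
  · exact integrable_const _
  · -- pointwise limit
    filter_upwards with p
    have hfactor : ∀ᶠ y : ℝ in l, (z y - ↑x₀) * (w y - ↑y₀) * ((z y - (p.1:ℂ)) * (w y - (p.2:ℂ)))⁻¹
        = ((z y - ↑x₀) / (z y - ↑p.1)) * ((w y - ↑y₀) / (w y - ↑p.2)) := by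
      filter_upwards [hz, hw] with y hy hwy
      rw [div_mul_div_comm]
      rw [div_eq_mul_inv]
    rw [tendsto_congr' hfactor]
    have l1 : Tendsto (fun y => (z y - ↑x₀) / (z y - ↑p.1)) l
        (𝓝 (if p.1 = x₀ then 1 else 0)) := by
      by_cases h : p.1 = x₀
      · subst h
        rw [if_pos rfl]
        apply Tendsto.congr' ?_ tendsto_const_nhds
        filter_upwards [hz] with y hy
        exact (div_self (sub_real_ne_zero hy.1 p.1)).symm
      · simp only [if_neg h]
        have hd : (x₀ : ℂ) - (p.1 : ℂ) ≠ 0 := by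
          simp only [sub_ne_zero, ne_eq]
          exact_mod_cast fun hh => h (by exact_mod_cast hh.symm)
        have hnum : Tendsto (fun y => z y - (x₀:ℂ)) l (𝓝 ((x₀:ℂ) - x₀)) :=
          hzt.sub tendsto_const_nhds
        have hden : Tendsto (fun y => z y - (p.1:ℂ)) l (𝓝 ((x₀:ℂ) - p.1)) :=
          hzt.sub tendsto_const_nhds
        have := hnum.div hden hd
        simpa [Pi.div_def] using this
    have l2 : Tendsto (fun y => (w y - ↑y₀) / (w y - ↑p.2)) l
        (𝓝 (if p.2 = y₀ then 1 else 0)) := by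
      by_cases h : p.2 = y₀
      · subst h
        rw [if_pos rfl]
        apply Tendsto.congr' ?_ tendsto_const_nhds
        filter_upwards [hw] with y hy
        exact (div_self (sub_real_ne_zero hy.1 p.2)).symm
      · simp only [if_neg h]
        have hd : (y₀ : ℂ) - (p.2 : ℂ) ≠ 0 := by
          simp only [sub_ne_zero, ne_eq]
          exact_mod_cast fun hh => h (by exact_mod_cast hh.symm)
        have hnum : Tendsto (fun y => w y - (y₀:ℂ)) l (𝓝 ((y₀:ℂ) - y₀)) :=
          hwt.sub tendsto_const_nhds
        have hden : Tendsto (fun y => w y - (p.2:ℂ)) l (𝓝 ((y₀:ℂ) - p.2)) :=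
          hwt.sub tendsto_const_nhds
        have := hnum.div hden hd
        simpa [Pi.div_def] using this
    have := l1.mul l2
    convert this using 2
    by_cases h1 : p.1 = x₀ <;> by_cases h2 : p.2 = y₀ <;>
      simp [Set.indicator, h1, h2, Prod.ext_iff]

lemma aux_ct1 (μ : Measure ℝ) [IsFiniteMeasure μ]
    {l : Filter ℝ} [l.IsCountablyGenerated] [l.NeBot]
    (z : ℝ → ℂ) (x₀ K : ℝ)
    (hz : ∀ᶠ y : ℝ in l, 0 < (z y).im ∧ ‖z y - x₀‖ ≤ K * (z y).im)
    (hzt : Tendsto z l (𝓝 (x₀ : ℂ))) :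
    Tendsto (fun y => (z y - x₀) * cauchyTransform μ (z y)) l
      (𝓝 ((μ ({x₀} : Set ℝ)).toReal : ℂ)) := by
  have key : ∀ y, (z y - x₀) * cauchyTransform μ (z y)
      = ∫ t, (z y - x₀) * (z y - (t:ℂ))⁻¹ ∂μ := by
    intro y; rw [cauchyTransform, ← integral_const_mul]
  have keyv : ((μ ({x₀} : Set ℝ)).toReal : ℂ)
      = ∫ t : ℝ, Set.indicator ({x₀} : Set ℝ) (fun _ => (1:ℂ)) t ∂μ := by
    rw [integral_indicator_const (1:ℂ) (measurableSet_singleton _)]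
    simp [Measure.real]
  simp only [key]
  rw [keyv]
  apply tendsto_integral_filter_of_dominated_convergence (fun _ => K)
  · filter_upwards [hz] with y hy
    apply AEStronglyMeasurable.const_mul
    apply Continuous.aestronglyMeasurable
    apply Continuous.inv₀
    · fun_prop
    · intro t; exact sub_real_ne_zero hy.1 t
  · filter_upwards [hz] with y hy
    filter_upwards with t
    have h1 : 0 < ‖z y - t‖ := norm_pos_iff.mpr (sub_real_ne_zero hy.1 t)
    have hb1 : ‖z y - x₀‖ ≤ K * ‖z y - t‖ := by
      refine hy.2.trans ?_
      have := im_le_abs_sub (z y) t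
      have hK : 0 ≤ K := by nlinarith [norm_nonneg (z y - x₀), hy.1, hy.2]
      nlinarith
    have : ‖(z y - ↑x₀) * (z y - (t:ℂ))⁻¹‖
        = ‖z y - x₀‖ / ‖z y - t‖ := by
      simp [map_mul, map_inv₀, div_eq_mul_inv]
    rw [this, div_le_iff₀ h1]
    exact hb1
  · exact integrable_const _
  · filter_upwards with t
    have hfactor : ∀ᶠ y : ℝ in l, (z y - ↑x₀) * (z y - (t:ℂ))⁻¹
        = (z y - ↑x₀) / (z y - ↑t) := by
      filter_upwards [hz] with y hy
      rw [div_eq_mul_inv]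
    rw [tendsto_congr' hfactor]
    have l1 : Tendsto (fun y => (z y - ↑x₀) / (z y - ↑t)) l
        (𝓝 (if t = x₀ then 1 else 0)) := by
      by_cases h : t = x₀
      · subst h
        rw [if_pos rfl]
        apply Tendsto.congr' ?_ tendsto_const_nhds
        filter_upwards [hz] with y hy
        exact (div_self (sub_real_ne_zero hy.1 t)).symm
      · rw [if_neg h]
        have hd : (x₀ : ℂ) - (t : ℂ) ≠ 0 := by
          simp only [sub_ne_zero, ne_eq]
          exact_mod_cast fun hh => h (by exact_mod_cast hh.symm)
        have hnum : Tendsto (fun y => z y - (x₀:ℂ)) l (𝓝 ((x₀:ℂ) - x₀)) :=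
          hzt.sub tendsto_const_nhds
        have hden : Tendsto (fun y => z y - (t:ℂ)) l (𝓝 ((x₀:ℂ) - t)) :=
          hzt.sub tendsto_const_nhds
        have := hnum.div hden hd
        simpa [Pi.div_def] using this
    have heq : Set.indicator ({x₀} : Set ℝ) (fun _ => (1:ℂ)) t = if t = x₀ then 1 else 0 := by
      by_cases h : t = x₀ <;> simp [h]
    rw [heq]
    exact l1

lemma im_I_mul (y : ℝ) (r : ℂ) : ((y:ℂ) * Complex.I * r).im = y * r.re := by
  simp [Complex.mul_im]

lemma abs_I_mul {y : ℝ} (hy : 0 < y) (r : ℂ) :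
    ‖(y:ℂ) * Complex.I * r‖ = y * ‖r‖ := by
  simp [map_mul, Complex.norm_real, abs_of_pos hy]

lemma yI_ne_zero {y : ℝ} (hy : 0 < y) : (y:ℂ) * Complex.I ≠ 0 := by
  simp [Complex.ext_iff, hy.ne']

lemma sub_analysis (ω : ℂ → ℂ) (ξ ξ₁ c : ℝ) (hc : 0 < c)
    (him : ∀ᶠ y : ℝ in 𝓝[>] (0:ℝ), 0 < (ω ((ξ:ℂ) + (y:ℂ) * Complex.I)).im)
    (hJC : Tendsto (fun y : ℝ => (ω ((ξ:ℂ) + (y:ℂ) * Complex.I) - (ξ₁:ℂ)) / ((y:ℂ) * Complex.I))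
      (𝓝[>] (0:ℝ)) (𝓝 (c:ℂ))) :
    Tendsto (fun y : ℝ => ω ((ξ:ℂ) + (y:ℂ)*Complex.I)) (𝓝[>] (0:ℝ)) (𝓝 (ξ₁:ℂ)) ∧
    (∀ᶠ y : ℝ in 𝓝[>] (0:ℝ), 0 < (ω ((ξ:ℂ)+(y:ℂ)*Complex.I)).im ∧
      ‖ω ((ξ:ℂ)+(y:ℂ)*Complex.I) - ξ₁‖ ≤ 2 * (ω ((ξ:ℂ)+(y:ℂ)*Complex.I)).im) ∧
    (∀ᶠ y : ℝ in 𝓝[>] (0:ℝ),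
      (ω ((ξ:ℂ)+(y:ℂ)*Complex.I)).im
        = y * ((ω ((ξ:ℂ)+(y:ℂ)*Complex.I) - (ξ₁:ℂ)) / ((y:ℂ)*Complex.I)).re ∧
      ‖ω ((ξ:ℂ)+(y:ℂ)*Complex.I) - ξ₁‖
        = y * ‖(ω ((ξ:ℂ)+(y:ℂ)*Complex.I) - (ξ₁:ℂ)) / ((y:ℂ)*Complex.I)‖ ∧
      0 < ((ω ((ξ:ℂ)+(y:ℂ)*Complex.I) - (ξ₁:ℂ)) / ((y:ℂ)*Complex.I)).re ∧
      ω ((ξ:ℂ)+(y:ℂ)*Complex.I) - ξ₁ ≠ 0) := by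
  have hl : (𝓝[>] (0:ℝ)) = 𝓝[>] (0:ℝ) := rfl
  let l : Filter ℝ := 𝓝[>] (0:ℝ)
  show Tendsto _ l _ ∧ (∀ᶠ y : ℝ in l, _) ∧ (∀ᶠ y : ℝ in l, _)
  set r : ℝ → ℂ :=
    fun y : ℝ => (ω ((ξ:ℂ) + (y:ℂ) * Complex.I) - (ξ₁:ℂ)) / ((y:ℂ) * Complex.I) with hr
  have hy0 : ∀ᶠ y : ℝ in l, 0 < y := self_mem_nhdsWithin
  have he : ∀ᶠ y : ℝ in l, ω ((ξ:ℂ)+(y:ℂ)*Complex.I) - ξ₁ = (y:ℂ) * Complex.I * r y := by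
    filter_upwards [hy0] with y hy
    rw [hr]
    field_simp [yI_ne_zero hy]
    rw [mul_div_cancel_left₀ _ (by exact_mod_cast hy.ne')]
  -- real part tendsto
  have trre : Tendsto (fun y => (r y).re) l (𝓝 c) := by
    have := (Complex.continuous_re.tendsto (c:ℂ)).comp hJC
    simpa [Function.comp_def] using this
  have trabs : Tendsto (fun y => ‖r y‖) l (𝓝 c) := by
    have := hJC.norm
    simpa [abs_of_pos hc] using this
  have hrepos : ∀ᶠ y : ℝ in l, 0 < (r y).re := trre.eventually (eventually_gt_nhds hc)
  have habslt : ∀ᶠ y : ℝ in l, ‖r y‖ ≤ 2 * (r y).re := by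
    have t2 : Tendsto (fun y => 2 * (r y).re - ‖r y‖) l (𝓝 (2*c - c)) :=
      (trre.const_mul 2).sub trabs
    have : (0:ℝ) < 2*c - c := by linarith
    filter_upwards [t2.eventually (eventually_gt_nhds this)] with y hy
    linarith
  have him' : ∀ᶠ y : ℝ in l,
      (ω ((ξ:ℂ)+(y:ℂ)*Complex.I)).im = y * (r y).re ∧
      ‖ω ((ξ:ℂ)+(y:ℂ)*Complex.I) - ξ₁‖ = y * ‖r y‖ ∧
      0 < (r y).re ∧ ω ((ξ:ℂ)+(y:ℂ)*Complex.I) - ξ₁ ≠ 0 := by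
    filter_upwards [hy0, he, hrepos, him] with y hy hey hrey himy
    have h1 : (ω ((ξ:ℂ)+(y:ℂ)*Complex.I)).im = y * (r y).re := by
      have : (ω ((ξ:ℂ)+(y:ℂ)*Complex.I) - (ξ₁:ℂ)).im = (ω ((ξ:ℂ)+(y:ℂ)*Complex.I)).im := by
        simp
      rw [← this, hey, im_I_mul]
    refine ⟨h1, ?_, hrey, ?_⟩
    · rw [hey, abs_I_mul hy]
    · intro h
      have h2 : (ω ((ξ:ℂ)+(y:ℂ)*Complex.I)).im = 0 := by
        have := congrArg Complex.im h
        simpa using this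
      linarith
  have tyI : Tendsto (fun y : ℝ => (y:ℂ) * Complex.I) l (𝓝 0) := by
    have t0 : Tendsto (fun y : ℝ => (y:ℂ)) l (𝓝 ((0:ℝ):ℂ)) :=
      ((Complex.continuous_ofReal.tendsto (0:ℝ)).mono_left nhdsWithin_le_nhds)
    simpa using t0.mul_const Complex.I
  have t1 : Tendsto (fun y : ℝ => ω ((ξ:ℂ)+(y:ℂ)*Complex.I)) l (𝓝 (ξ₁:ℂ)) := by
    have t2 : Tendsto (fun y : ℝ => (ξ₁:ℂ) + (y:ℂ)*Complex.I * r y) l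
        (𝓝 ((ξ₁:ℂ) + 0 * (c:ℂ))) := tendsto_const_nhds.add (tyI.mul hJC)
    apply Tendsto.congr' ?_ (by simpa using t2)
    filter_upwards [he] with y hey
    rw [← hey]; ring
  refine ⟨t1, ?_, him'⟩
  filter_upwards [him, him', habslt] with y h0 hy5 h5
  obtain ⟨h1, h2, h3, h4⟩ := hy5
  refine ⟨h0, ?_⟩
  rw [h2, h1]
  have hy : 0 < y := by
    by_contra hcon
    push_neg at hcon
    nlinarith [norm_nonneg (ω ((ξ:ℂ)+(y:ℂ)*Complex.I) - (ξ₁:ℂ))]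
  nlinarith

lemma alg_main (u G1 G2 Gm Gn Gh A B C D : ℂ) (hu : u ≠ 0) (hA : A ≠ 0) (hB : B ≠ 0)
    (hC : C ≠ 0) (hD : D ≠ 0) (hG1 : G1 ≠ 0) (hG2 : G2 ≠ 0) (hGh : Gh ≠ 0)
    (hid : G1⁻¹ + G2⁻¹ = (Gm * Gn)⁻¹ + Gh⁻¹) :
    A / u * (B / u) * (A * B * G1)⁻¹ + C / u * (D / u) * (C * D * G2)⁻¹
      = (u * Gm * (u * Gn))⁻¹ + (u * u * Gh)⁻¹ := by
  have t : ∀ X Y G : ℂ, X ≠ 0 → Y ≠ 0 → X / u * (Y / u) * (X * Y * G)⁻¹ = (u * u)⁻¹ * G⁻¹ := by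
    intro X Y G hX hY
    rcases eq_or_ne G 0 with h | h
    · simp [h]
    · field_simp
  have h : A / u * (B / u) * (A * B * G1)⁻¹ + C / u * (D / u) * (C * D * G2)⁻¹
      = (u * u)⁻¹ * (G1⁻¹ + G2⁻¹) := by
    rw [t A B G1 hA hB, t C D G2 hC hD, mul_add]
  rw [h, hid, show u * Gm * (u * Gn) = (u * u) * (Gm * Gn) by ring,
    mul_inv (u*u) (Gm*Gn), mul_inv (u*u) Gh, mul_add]
set_option maxHeartbeats 2000000 in
theorem stmt13
    (η₁ η₂ η : Measure (ℝ × ℝ))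
    [IsProbabilityMeasure η₁] [IsProbabilityMeasure η₂] [IsProbabilityMeasure η]
    (ξ ζ ξ₁ ξ₂ ζ₁ ζ₂ : ℝ)
    (hξ : ξ₁ + ξ₂ = ξ) (hζ : ζ₁ + ζ₂ = ζ)
    (hatom : 0 < η ({(ξ, ζ)} : Set (ℝ × ℝ)))
    (hμ₁ : 0 < (η₁.map Prod.fst) {ξ₁}) (hμ₂ : 0 < (η₂.map Prod.fst) {ξ₂})
    (hν₁ : 0 < (η₁.map Prod.snd) {ζ₁}) (hν₂ : 0 < (η₂.map Prod.snd) {ζ₂})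
    (ωa₁ ωa₂ ωb₁ ωb₂ : ℂ → ℂ)
    (hmap : ∀ z : ℂ, 0 < z.im →
      0 < (ωa₁ z).im ∧ 0 < (ωa₂ z).im ∧ 0 < (ωb₁ z).im ∧ 0 < (ωb₂ z).im)
    -- (i) Julia–Carathéodory behavior of the subordination functions at the atoms
    (hJCa₁ : Tendsto (fun y : ℝ => (ωa₁ ((ξ : ℂ) + (y : ℂ) * Complex.I) - (ξ₁ : ℂ)) /
        ((y : ℂ) * Complex.I)) (𝓝[>] (0 : ℝ))
      (𝓝 ((((η₁.map Prod.fst) {ξ₁}).toReal / ((η.map Prod.fst) {ξ}).toReal : ℝ) : ℂ)))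
    (hJCa₂ : Tendsto (fun y : ℝ => (ωa₂ ((ξ : ℂ) + (y : ℂ) * Complex.I) - (ξ₂ : ℂ)) /
        ((y : ℂ) * Complex.I)) (𝓝[>] (0 : ℝ))
      (𝓝 ((((η₂.map Prod.fst) {ξ₂}).toReal / ((η.map Prod.fst) {ξ}).toReal : ℝ) : ℂ)))
    (hJCb₁ : Tendsto (fun y : ℝ => (ωb₁ ((ζ : ℂ) + (y : ℂ) * Complex.I) - (ζ₁ : ℂ)) /
        ((y : ℂ) * Complex.I)) (𝓝[>] (0 : ℝ))
      (𝓝 ((((η₁.map Prod.snd) {ζ₁}).toReal / ((η.map Prod.snd) {ζ}).toReal : ℝ) : ℂ)))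
    (hJCb₂ : Tendsto (fun y : ℝ => (ωb₂ ((ζ : ℂ) + (y : ℂ) * Complex.I) - (ζ₂ : ℂ)) /
        ((y : ℂ) * Complex.I)) (𝓝[>] (0 : ℝ))
      (𝓝 ((((η₂.map Prod.snd) {ζ₂}).toReal / ((η.map Prod.snd) {ζ}).toReal : ℝ) : ℂ)))
    -- (ii) the bi-free subordination identity for small y > 0
    (hsub : ∀ᶠ (y : ℝ) in 𝓝[>] (0 : ℝ),
      cauchyTransform2 η ((ξ : ℂ) + (y : ℂ) * Complex.I) ((ζ : ℂ) + (y : ℂ) * Complex.I) ≠ 0 ∧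
      cauchyTransform2 η₁ (ωa₁ ((ξ : ℂ) + (y : ℂ) * Complex.I))
        (ωb₁ ((ζ : ℂ) + (y : ℂ) * Complex.I)) ≠ 0 ∧
      cauchyTransform2 η₂ (ωa₂ ((ξ : ℂ) + (y : ℂ) * Complex.I))
        (ωb₂ ((ζ : ℂ) + (y : ℂ) * Complex.I)) ≠ 0 ∧
      (cauchyTransform2 η₁ (ωa₁ ((ξ : ℂ) + (y : ℂ) * Complex.I))
          (ωb₁ ((ζ : ℂ) + (y : ℂ) * Complex.I)))⁻¹ +
        (cauchyTransform2 η₂ (ωa₂ ((ξ : ℂ) + (y : ℂ) * Complex.I))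
          (ωb₂ ((ζ : ℂ) + (y : ℂ) * Complex.I)))⁻¹ =
      (cauchyTransform (η.map Prod.fst) ((ξ : ℂ) + (y : ℂ) * Complex.I) *
          cauchyTransform (η.map Prod.snd) ((ζ : ℂ) + (y : ℂ) * Complex.I))⁻¹ +
        (cauchyTransform2 η ((ξ : ℂ) + (y : ℂ) * Complex.I)
          ((ζ : ℂ) + (y : ℂ) * Complex.I))⁻¹)
    -- (iii) the bound of Proposition 3.4
    (hbound₁ : ∀ z w : ℂ, 0 < z.im → 0 < w.im →
      z.im * w.im * ‖cauchyTransform2 η z w‖ ^ 2 ≤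
        (ωa₁ z).im * (ωb₁ w).im * ‖cauchyTransform2 η₁ (ωa₁ z) (ωb₁ w)‖ ^ 2)
    (hbound₂ : ∀ z w : ℂ, 0 < z.im → 0 < w.im →
      z.im * w.im * ‖cauchyTransform2 η z w‖ ^ 2 ≤
        (ωa₂ z).im * (ωb₂ w).im * ‖cauchyTransform2 η₂ (ωa₂ z) (ωb₂ w)‖ ^ 2) :
    0 < η₁ ({(ξ₁, ζ₁)} : Set (ℝ × ℝ)) ∧ 0 < η₂ ({(ξ₂, ζ₂)} : Set (ℝ × ℝ)) ∧
    1 + ((η.map Prod.fst) {ξ}).toReal * ((η.map Prod.snd) {ζ}).toReal /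
        (η ({(ξ, ζ)} : Set (ℝ × ℝ))).toReal =
      ((η₁.map Prod.fst) {ξ₁}).toReal * ((η₁.map Prod.snd) {ζ₁}).toReal /
        (η₁ ({(ξ₁, ζ₁)} : Set (ℝ × ℝ))).toReal +
      ((η₂.map Prod.fst) {ξ₂}).toReal * ((η₂.map Prod.snd) {ζ₂}).toReal /
        (η₂ ({(ξ₂, ζ₂)} : Set (ℝ × ℝ))).toReal := by
  have h0 : ∀ᶠ y : ℝ in 𝓝[>] (0:ℝ), 0 < y := self_mem_nhdsWithin
  -- probability instances for marginals
  haveI : IsProbabilityMeasure (η.map Prod.fst) := Measure.isProbabilityMeasure_map measurable_fst.aemeasurable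
  haveI : IsProbabilityMeasure (η.map Prod.snd) := Measure.isProbabilityMeasure_map measurable_snd.aemeasurable
  haveI : IsProbabilityMeasure (η₁.map Prod.fst) := Measure.isProbabilityMeasure_map measurable_fst.aemeasurable
  haveI : IsProbabilityMeasure (η₁.map Prod.snd) := Measure.isProbabilityMeasure_map measurable_snd.aemeasurable
  haveI : IsProbabilityMeasure (η₂.map Prod.fst) := Measure.isProbabilityMeasure_map measurable_fst.aemeasurable
  haveI : IsProbabilityMeasure (η₂.map Prod.snd) := Measure.isProbabilityMeasure_map measurable_snd.aemeasurable
  set m : ℝ := ((η.map Prod.fst) {ξ}).toReal with hm_def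
  set n : ℝ := ((η.map Prod.snd) {ζ}).toReal with hn_def
  set m₁ : ℝ := ((η₁.map Prod.fst) {ξ₁}).toReal with hm1_def
  set n₁ : ℝ := ((η₁.map Prod.snd) {ζ₁}).toReal with hn1_def
  set m₂ : ℝ := ((η₂.map Prod.fst) {ξ₂}).toReal with hm2_def
  set n₂ : ℝ := ((η₂.map Prod.snd) {ζ₂}).toReal with hn2_def
  set a : ℝ := (η ({(ξ, ζ)} : Set (ℝ × ℝ))).toReal with ha_def
  set a₁ : ℝ := (η₁ ({(ξ₁, ζ₁)} : Set (ℝ × ℝ))).toReal with ha1_def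
  set a₂ : ℝ := (η₂ ({(ξ₂, ζ₂)} : Set (ℝ × ℝ))).toReal with ha2_def
  -- positivity of the marginal masses
  have hle₁ : η ({(ξ,ζ)} : Set (ℝ×ℝ)) ≤ (η.map Prod.fst) {ξ} := by
    rw [Measure.map_apply measurable_fst (measurableSet_singleton _)]
    apply measure_mono
    intro p hp
    simp only [Set.mem_singleton_iff] at hp
    simp [hp]
  have hle₂ : η ({(ξ,ζ)} : Set (ℝ×ℝ)) ≤ (η.map Prod.snd) {ζ} := by
    rw [Measure.map_apply measurable_snd (measurableSet_singleton _)]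
    apply measure_mono
    intro p hp
    simp only [Set.mem_singleton_iff] at hp
    simp [hp]
  have ha : 0 < a := ENNReal.toReal_pos hatom.ne' (measure_ne_top _ _)
  have hm : 0 < m := ENNReal.toReal_pos (lt_of_lt_of_le hatom hle₁).ne' (measure_ne_top _ _)
  have hn : 0 < n := ENNReal.toReal_pos (lt_of_lt_of_le hatom hle₂).ne' (measure_ne_top _ _)
  have hm1 : 0 < m₁ := ENNReal.toReal_pos hμ₁.ne' (measure_ne_top _ _)
  have hm2 : 0 < m₂ := ENNReal.toReal_pos hμ₂.ne' (measure_ne_top _ _)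
  have hn1 : 0 < n₁ := ENNReal.toReal_pos hν₁.ne' (measure_ne_top _ _)
  have hn2 : 0 < n₂ := ENNReal.toReal_pos hν₂.ne' (measure_ne_top _ _)
  -- subordination function analysis
  have hima1 : ∀ᶠ y : ℝ in 𝓝[>] (0:ℝ), 0 < (ωa₁ ((ξ:ℂ) + (y:ℂ) * Complex.I)).im := by
    filter_upwards [h0] with y hy
    exact (hmap _ (by simpa using hy)).1
  have hima2 : ∀ᶠ y : ℝ in 𝓝[>] (0:ℝ), 0 < (ωa₂ ((ξ:ℂ) + (y:ℂ) * Complex.I)).im := by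
    filter_upwards [h0] with y hy
    exact (hmap _ (by simpa using hy)).2.1
  have himb1 : ∀ᶠ y : ℝ in 𝓝[>] (0:ℝ), 0 < (ωb₁ ((ζ:ℂ) + (y:ℂ) * Complex.I)).im := by
    filter_upwards [h0] with y hy
    exact (hmap _ (by simpa using hy)).2.2.1
  have himb2 : ∀ᶠ y : ℝ in 𝓝[>] (0:ℝ), 0 < (ωb₂ ((ζ:ℂ) + (y:ℂ) * Complex.I)).im := by
    filter_upwards [h0] with y hy
    exact (hmap _ (by simpa using hy)).2.2.2
  obtain ⟨ta1, nta1, ev_a1⟩ := sub_analysis ωa₁ ξ ξ₁ (m₁/m) (div_pos hm1 hm) hima1 hJCa₁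
  obtain ⟨ta2, nta2, ev_a2⟩ := sub_analysis ωa₂ ξ ξ₂ (m₂/m) (div_pos hm2 hm) hima2 hJCa₂
  obtain ⟨tb1, ntb1, ev_b1⟩ := sub_analysis ωb₁ ζ ζ₁ (n₁/n) (div_pos hn1 hn) himb1 hJCb₁
  obtain ⟨tb2, ntb2, ev_b2⟩ := sub_analysis ωb₂ ζ ζ₂ (n₂/n) (div_pos hn2 hn) himb2 hJCb₂
  -- vertical paths
  have tvert : ∀ x : ℝ, Tendsto (fun y : ℝ => (x:ℂ) + (y:ℂ) * Complex.I) (𝓝[>] (0:ℝ))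
      (𝓝 (x:ℂ)) := by
    intro x
    have t0 : Tendsto (fun y : ℝ => (y:ℂ)) (𝓝[>] (0:ℝ)) (𝓝 ((0:ℝ):ℂ)) :=
      (Complex.continuous_ofReal.tendsto (0:ℝ)).mono_left nhdsWithin_le_nhds
    have t1 : Tendsto (fun y : ℝ => (x:ℂ) + (y:ℂ) * Complex.I) (𝓝[>] (0:ℝ))
        (𝓝 ((x:ℂ) + ((0:ℝ):ℂ) * Complex.I)) :=
      tendsto_const_nhds.add (t0.mul_const Complex.I)
    simpa using t1
  have hvert : ∀ x : ℝ, ∀ᶠ y : ℝ in 𝓝[>] (0:ℝ), 0 < ((x:ℂ) + (y:ℂ)*Complex.I).im ∧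
      ‖(x:ℂ) + (y:ℂ)*Complex.I - (x:ℂ)‖ ≤ 1 * ((x:ℂ) + (y:ℂ)*Complex.I).im := by
    intro x
    filter_upwards [h0] with y hy
    constructor
    · simpa using hy
    · simp [add_sub_cancel_left, Complex.norm_real, abs_of_pos hy, map_mul]
  -- limits of the Cauchy transforms along the vertical/subordinated paths
  have tM : Tendsto (fun y : ℝ => (y:ℂ) * Complex.I *
      cauchyTransform (η.map Prod.fst) ((ξ:ℂ) + (y:ℂ)*Complex.I)) (𝓝[>] (0:ℝ)) (𝓝 (m:ℂ)) := by
    have := aux_ct1 (η.map Prod.fst) (fun y : ℝ => (ξ:ℂ) + (y:ℂ)*Complex.I) ξ 1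
      (hvert ξ) (tvert ξ)
    rw [hm_def]
    exact this.congr (fun y => by rw [add_sub_cancel_left])
  have tN : Tendsto (fun y : ℝ => (y:ℂ) * Complex.I *
      cauchyTransform (η.map Prod.snd) ((ζ:ℂ) + (y:ℂ)*Complex.I)) (𝓝[>] (0:ℝ)) (𝓝 (n:ℂ)) := by
    have := aux_ct1 (η.map Prod.snd) (fun y : ℝ => (ζ:ℂ) + (y:ℂ)*Complex.I) ζ 1
      (hvert ζ) (tvert ζ)
    rw [hn_def]
    exact this.congr (fun y => by rw [add_sub_cancel_left])
  have tA : Tendsto (fun y : ℝ => (y:ℂ) * Complex.I * ((y:ℂ) * Complex.I) *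
      cauchyTransform2 η ((ξ:ℂ) + (y:ℂ)*Complex.I) ((ζ:ℂ) + (y:ℂ)*Complex.I))
      (𝓝[>] (0:ℝ)) (𝓝 (a:ℂ)) := by
    have := aux_ct2 η (fun y : ℝ => (ξ:ℂ) + (y:ℂ)*Complex.I)
      (fun y : ℝ => (ζ:ℂ) + (y:ℂ)*Complex.I) ξ ζ 1 1 (hvert ξ) (hvert ζ) (tvert ξ) (tvert ζ)
    rw [ha_def]
    exact this.congr (fun y => by rw [add_sub_cancel_left, add_sub_cancel_left])
  have tB1 : Tendsto (fun y : ℝ => (ωa₁ ((ξ:ℂ) + (y:ℂ)*Complex.I) - (ξ₁:ℂ)) *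
      (ωb₁ ((ζ:ℂ) + (y:ℂ)*Complex.I) - (ζ₁:ℂ)) *
      cauchyTransform2 η₁ (ωa₁ ((ξ:ℂ) + (y:ℂ)*Complex.I)) (ωb₁ ((ζ:ℂ) + (y:ℂ)*Complex.I)))
      (𝓝[>] (0:ℝ)) (𝓝 (a₁:ℂ)) := by
    have := aux_ct2 η₁ (fun y : ℝ => ωa₁ ((ξ:ℂ) + (y:ℂ)*Complex.I))
      (fun y : ℝ => ωb₁ ((ζ:ℂ) + (y:ℂ)*Complex.I)) ξ₁ ζ₁ 2 2 nta1 ntb1 ta1 tb1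
    rw [ha1_def]
    exact this
  have tB2 : Tendsto (fun y : ℝ => (ωa₂ ((ξ:ℂ) + (y:ℂ)*Complex.I) - (ξ₂:ℂ)) *
      (ωb₂ ((ζ:ℂ) + (y:ℂ)*Complex.I) - (ζ₂:ℂ)) *
      cauchyTransform2 η₂ (ωa₂ ((ξ:ℂ) + (y:ℂ)*Complex.I)) (ωb₂ ((ζ:ℂ) + (y:ℂ)*Complex.I)))
      (𝓝[>] (0:ℝ)) (𝓝 (a₂:ℂ)) := by
    have := aux_ct2 η₂ (fun y : ℝ => ωa₂ ((ξ:ℂ) + (y:ℂ)*Complex.I))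
      (fun y : ℝ => ωb₂ ((ζ:ℂ) + (y:ℂ)*Complex.I)) ξ₂ ζ₂ 2 2 nta2 ntb2 ta2 tb2
    rw [ha2_def]
    exact this
  -- abs/re limits of the r–functions
  have hca1 : (0:ℝ) < m₁/m := div_pos hm1 hm
  have hca2 : (0:ℝ) < m₂/m := div_pos hm2 hm
  have hcb1 : (0:ℝ) < n₁/n := div_pos hn1 hn
  have hcb2 : (0:ℝ) < n₂/n := div_pos hn2 hn
  have tra1abs : Tendsto (fun y : ℝ => ‖(ωa₁ ((ξ:ℂ) + (y:ℂ)*Complex.I) - (ξ₁:ℂ)) / ((y:ℂ)*Complex.I)‖) (𝓝[>] (0:ℝ))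
      (𝓝 (m₁/m)) := by
    have h := hJCa₁.norm
    rw [show ‖((m₁/m : ℝ):ℂ)‖ = m₁/m by
      rw [Complex.norm_real, Real.norm_eq_abs]; exact abs_of_pos hca1] at h
    simpa only using h
  have trb1abs : Tendsto (fun y : ℝ => ‖(ωb₁ ((ζ:ℂ) + (y:ℂ)*Complex.I) - (ζ₁:ℂ)) / ((y:ℂ)*Complex.I)‖) (𝓝[>] (0:ℝ))
      (𝓝 (n₁/n)) := by
    have h := hJCb₁.norm
    rw [show ‖((n₁/n : ℝ):ℂ)‖ = n₁/n by
      rw [Complex.norm_real, Real.norm_eq_abs]; exact abs_of_pos hcb1] at h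
    simpa only using h
  have tra2abs : Tendsto (fun y : ℝ => ‖(ωa₂ ((ξ:ℂ) + (y:ℂ)*Complex.I) - (ξ₂:ℂ)) / ((y:ℂ)*Complex.I)‖) (𝓝[>] (0:ℝ))
      (𝓝 (m₂/m)) := by
    have h := hJCa₂.norm
    rw [show ‖((m₂/m : ℝ):ℂ)‖ = m₂/m by
      rw [Complex.norm_real, Real.norm_eq_abs]; exact abs_of_pos hca2] at h
    simpa only using h
  have trb2abs : Tendsto (fun y : ℝ => ‖(ωb₂ ((ζ:ℂ) + (y:ℂ)*Complex.I) - (ζ₂:ℂ)) / ((y:ℂ)*Complex.I)‖) (𝓝[>] (0:ℝ))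
      (𝓝 (n₂/n)) := by
    have h := hJCb₂.norm
    rw [show ‖((n₂/n : ℝ):ℂ)‖ = n₂/n by
      rw [Complex.norm_real, Real.norm_eq_abs]; exact abs_of_pos hcb2] at h
    simpa only using h
  have tra1re : Tendsto (fun y : ℝ =>
      ((ωa₁ ((ξ:ℂ) + (y:ℂ)*Complex.I) - (ξ₁:ℂ)) / ((y:ℂ)*Complex.I)).re) (𝓝[>] (0:ℝ))
      (𝓝 (m₁/m)) := by
    simpa [Function.comp_def] using (Complex.continuous_re.tendsto _).comp hJCa₁
  have trb1re : Tendsto (fun y : ℝ =>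
      ((ωb₁ ((ζ:ℂ) + (y:ℂ)*Complex.I) - (ζ₁:ℂ)) / ((y:ℂ)*Complex.I)).re) (𝓝[>] (0:ℝ))
      (𝓝 (n₁/n)) := by
    simpa [Function.comp_def] using (Complex.continuous_re.tendsto _).comp hJCb₁
  have tra2re : Tendsto (fun y : ℝ =>
      ((ωa₂ ((ξ:ℂ) + (y:ℂ)*Complex.I) - (ξ₂:ℂ)) / ((y:ℂ)*Complex.I)).re) (𝓝[>] (0:ℝ))
      (𝓝 (m₂/m)) := by
    simpa [Function.comp_def] using (Complex.continuous_re.tendsto _).comp hJCa₂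
  have trb2re : Tendsto (fun y : ℝ =>
      ((ωb₂ ((ζ:ℂ) + (y:ℂ)*Complex.I) - (ζ₂:ℂ)) / ((y:ℂ)*Complex.I)).re) (𝓝[>] (0:ℝ))
      (𝓝 (n₂/n)) := by
    simpa [Function.comp_def] using (Complex.continuous_re.tendsto _).comp hJCb₂
  have tAabs : Tendsto (fun y : ℝ => ‖(y:ℂ) * Complex.I * ((y:ℂ) * Complex.I) *
      cauchyTransform2 η ((ξ:ℂ) + (y:ℂ)*Complex.I) ((ζ:ℂ) + (y:ℂ)*Complex.I)‖)
      (𝓝[>] (0:ℝ)) (𝓝 a) := by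
    have h := tA.norm
    rw [show ‖((a : ℝ):ℂ)‖ = a by
      rw [Complex.norm_real, Real.norm_eq_abs]; exact abs_of_pos ha] at h
    simpa only using h
  have tB1abs : Tendsto (fun y : ℝ => ‖(ωa₁ ((ξ:ℂ) + (y:ℂ)*Complex.I) - (ξ₁:ℂ)) *
      (ωb₁ ((ζ:ℂ) + (y:ℂ)*Complex.I) - (ζ₁:ℂ)) *
      cauchyTransform2 η₁ (ωa₁ ((ξ:ℂ) + (y:ℂ)*Complex.I)) (ωb₁ ((ζ:ℂ) + (y:ℂ)*Complex.I))‖)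
      (𝓝[>] (0:ℝ)) (𝓝 a₁) := by
    have h := tB1.norm
    rw [show ‖((a₁ : ℝ):ℂ)‖ = a₁ by
      rw [Complex.norm_real, Real.norm_eq_abs]
      exact _root_.abs_of_nonneg ENNReal.toReal_nonneg] at h
    simpa only using h
  have tB2abs : Tendsto (fun y : ℝ => ‖(ωa₂ ((ξ:ℂ) + (y:ℂ)*Complex.I) - (ξ₂:ℂ)) *
      (ωb₂ ((ζ:ℂ) + (y:ℂ)*Complex.I) - (ζ₂:ℂ)) *
      cauchyTransform2 η₂ (ωa₂ ((ξ:ℂ) + (y:ℂ)*Complex.I)) (ωb₂ ((ζ:ℂ) + (y:ℂ)*Complex.I))‖)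
      (𝓝[>] (0:ℝ)) (𝓝 a₂) := by
    have h := tB2.norm
    rw [show ‖((a₂ : ℝ):ℂ)‖ = a₂ by
      rw [Complex.norm_real, Real.norm_eq_abs]
      exact _root_.abs_of_nonneg ENNReal.toReal_nonneg] at h
    simpa only using h
  -- the quantitative bound, side 1
  have hquant1 : ∀ᶠ y : ℝ in 𝓝[>] (0:ℝ),
      ‖(ωa₁ ((ξ:ℂ) + (y:ℂ)*Complex.I) - (ξ₁:ℂ)) / ((y:ℂ)*Complex.I)‖ ^ 2 *
        ‖(ωb₁ ((ζ:ℂ) + (y:ℂ)*Complex.I) - (ζ₁:ℂ)) / ((y:ℂ)*Complex.I)‖ ^ 2 *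
        ‖(y:ℂ) * Complex.I * ((y:ℂ) * Complex.I) *
          cauchyTransform2 η ((ξ:ℂ) + (y:ℂ)*Complex.I) ((ζ:ℂ) + (y:ℂ)*Complex.I)‖ ^ 2 ≤
      ‖(ωa₁ ((ξ:ℂ) + (y:ℂ)*Complex.I) - (ξ₁:ℂ)) *
        (ωb₁ ((ζ:ℂ) + (y:ℂ)*Complex.I) - (ζ₁:ℂ)) *
        cauchyTransform2 η₁ (ωa₁ ((ξ:ℂ) + (y:ℂ)*Complex.I)) (ωb₁ ((ζ:ℂ) + (y:ℂ)*Complex.I))‖ ^ 2 *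
      (((ωa₁ ((ξ:ℂ) + (y:ℂ)*Complex.I) - (ξ₁:ℂ)) / ((y:ℂ)*Complex.I)).re *
        ((ωb₁ ((ζ:ℂ) + (y:ℂ)*Complex.I) - (ζ₁:ℂ)) / ((y:ℂ)*Complex.I)).re) := by
    filter_upwards [h0, ev_a1, ev_b1] with y hy hA hB
    obtain ⟨hima, habsa, hrea, -⟩ := hA
    obtain ⟨himb, habsb, hreb, -⟩ := hB
    have hbd := hbound₁ ((ξ:ℂ)+(y:ℂ)*Complex.I) ((ζ:ℂ)+(y:ℂ)*Complex.I)
      (by simpa using hy) (by simpa using hy)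
    rw [show ((ξ:ℂ)+(y:ℂ)*Complex.I).im = y by simp,
        show ((ζ:ℂ)+(y:ℂ)*Complex.I).im = y by simp, hima, himb] at hbd
    simp only [norm_mul]
    rw [habsa, habsb]
    rw [show ‖((y:ℝ):ℂ)‖ = y from by
      simp [Complex.norm_real, abs_of_pos hy], Complex.norm_I]
    have key := mul_le_mul_of_nonneg_left hbd
      (show (0:ℝ) ≤ y^2 *
          ‖(ωa₁ ((ξ:ℂ) + (y:ℂ)*Complex.I) - (ξ₁:ℂ)) / ((y:ℂ)*Complex.I)‖ ^2 *
          ‖(ωb₁ ((ζ:ℂ) + (y:ℂ)*Complex.I) - (ζ₁:ℂ)) / ((y:ℂ)*Complex.I)‖ ^2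
        by positivity)
    exact le_trans (le_of_eq (by ring)) (le_trans key (le_of_eq (by ring)))
  -- the quantitative bound, side 2
  have hquant2 : ∀ᶠ y : ℝ in 𝓝[>] (0:ℝ),
      ‖(ωa₂ ((ξ:ℂ) + (y:ℂ)*Complex.I) - (ξ₂:ℂ)) / ((y:ℂ)*Complex.I)‖ ^ 2 *
        ‖(ωb₂ ((ζ:ℂ) + (y:ℂ)*Complex.I) - (ζ₂:ℂ)) / ((y:ℂ)*Complex.I)‖ ^ 2 *
        ‖(y:ℂ) * Complex.I * ((y:ℂ) * Complex.I) *
          cauchyTransform2 η ((ξ:ℂ) + (y:ℂ)*Complex.I) ((ζ:ℂ) + (y:ℂ)*Complex.I)‖ ^ 2 ≤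
      ‖(ωa₂ ((ξ:ℂ) + (y:ℂ)*Complex.I) - (ξ₂:ℂ)) *
        (ωb₂ ((ζ:ℂ) + (y:ℂ)*Complex.I) - (ζ₂:ℂ)) *
        cauchyTransform2 η₂ (ωa₂ ((ξ:ℂ) + (y:ℂ)*Complex.I)) (ωb₂ ((ζ:ℂ) + (y:ℂ)*Complex.I))‖ ^ 2 *
      (((ωa₂ ((ξ:ℂ) + (y:ℂ)*Complex.I) - (ξ₂:ℂ)) / ((y:ℂ)*Complex.I)).re *
        ((ωb₂ ((ζ:ℂ) + (y:ℂ)*Complex.I) - (ζ₂:ℂ)) / ((y:ℂ)*Complex.I)).re) := by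
    filter_upwards [h0, ev_a2, ev_b2] with y hy hA hB
    obtain ⟨hima, habsa, hrea, -⟩ := hA
    obtain ⟨himb, habsb, hreb, -⟩ := hB
    have hbd := hbound₂ ((ξ:ℂ)+(y:ℂ)*Complex.I) ((ζ:ℂ)+(y:ℂ)*Complex.I)
      (by simpa using hy) (by simpa using hy)
    rw [show ((ξ:ℂ)+(y:ℂ)*Complex.I).im = y by simp,
        show ((ζ:ℂ)+(y:ℂ)*Complex.I).im = y by simp, hima, himb] at hbd
    simp only [norm_mul]
    rw [habsa, habsb]
    rw [show ‖((y:ℝ):ℂ)‖ = y from by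
      simp [Complex.norm_real, abs_of_pos hy], Complex.norm_I]
    have key := mul_le_mul_of_nonneg_left hbd
      (show (0:ℝ) ≤ y^2 *
          ‖(ωa₂ ((ξ:ℂ) + (y:ℂ)*Complex.I) - (ξ₂:ℂ)) / ((y:ℂ)*Complex.I)‖ ^2 *
          ‖(ωb₂ ((ζ:ℂ) + (y:ℂ)*Complex.I) - (ζ₂:ℂ)) / ((y:ℂ)*Complex.I)‖ ^2
        by positivity)
    exact le_trans (le_of_eq (by ring)) (le_trans key (le_of_eq (by ring)))
  -- positivity of the atoms of η₁, η₂
  have hle1 := le_of_tendsto_of_tendsto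
    (((tra1abs.pow 2).mul (trb1abs.pow 2)).mul (tAabs.pow 2))
    ((tB1abs.pow 2).mul (tra1re.mul trb1re)) hquant1
  have hle2 := le_of_tendsto_of_tendsto
    (((tra2abs.pow 2).mul (trb2abs.pow 2)).mul (tAabs.pow 2))
    ((tB2abs.pow 2).mul (tra2re.mul trb2re)) hquant2
  have ha1 : 0 < a₁ := by
    have h1 : (0:ℝ) ≤ a₁ := ENNReal.toReal_nonneg
    rcases h1.lt_or_eq with h | h
    · exact h
    · exfalso
      rw [← h] at hle1
      have h2 : (m₁/m)^2*(n₁/n)^2*a^2 ≤ 0 := by simpa using hle1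
      nlinarith [mul_pos (mul_pos (pow_pos hca1 2) (pow_pos hcb1 2)) (pow_pos ha 2)]
  have ha2 : 0 < a₂ := by
    have h1 : (0:ℝ) ≤ a₂ := ENNReal.toReal_nonneg
    rcases h1.lt_or_eq with h | h
    · exact h
    · exfalso
      rw [← h] at hle2
      have h2 : (m₂/m)^2*(n₂/n)^2*a^2 ≤ 0 := by simpa using hle2
      nlinarith [mul_pos (mul_pos (pow_pos hca2 2) (pow_pos hcb2 2)) (pow_pos ha 2)]
  have hpos1 : 0 < η₁ ({(ξ₁, ζ₁)} : Set (ℝ × ℝ)) := (ENNReal.toReal_pos_iff.mp ha1).1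
  have hpos2 : 0 < η₂ ({(ξ₂, ζ₂)} : Set (ℝ × ℝ)) := (ENNReal.toReal_pos_iff.mp ha2).1
  -- pass to the limit in the subordination identity
  have hLR : ∀ᶠ y : ℝ in 𝓝[>] (0:ℝ),
      (ωa₁ ((ξ:ℂ)+(y:ℂ)*Complex.I) - (ξ₁:ℂ)) / ((y:ℂ)*Complex.I) *
        ((ωb₁ ((ζ:ℂ)+(y:ℂ)*Complex.I) - (ζ₁:ℂ)) / ((y:ℂ)*Complex.I)) *
        ((ωa₁ ((ξ:ℂ)+(y:ℂ)*Complex.I) - (ξ₁:ℂ)) * (ωb₁ ((ζ:ℂ)+(y:ℂ)*Complex.I) - (ζ₁:ℂ)) *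
          cauchyTransform2 η₁ (ωa₁ ((ξ:ℂ)+(y:ℂ)*Complex.I)) (ωb₁ ((ζ:ℂ)+(y:ℂ)*Complex.I)))⁻¹ +
      (ωa₂ ((ξ:ℂ)+(y:ℂ)*Complex.I) - (ξ₂:ℂ)) / ((y:ℂ)*Complex.I) *
        ((ωb₂ ((ζ:ℂ)+(y:ℂ)*Complex.I) - (ζ₂:ℂ)) / ((y:ℂ)*Complex.I)) *
        ((ωa₂ ((ξ:ℂ)+(y:ℂ)*Complex.I) - (ξ₂:ℂ)) * (ωb₂ ((ζ:ℂ)+(y:ℂ)*Complex.I) - (ζ₂:ℂ)) *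
          cauchyTransform2 η₂ (ωa₂ ((ξ:ℂ)+(y:ℂ)*Complex.I)) (ωb₂ ((ζ:ℂ)+(y:ℂ)*Complex.I)))⁻¹ =
      ((y:ℂ)*Complex.I * cauchyTransform (η.map Prod.fst) ((ξ:ℂ)+(y:ℂ)*Complex.I) *
        ((y:ℂ)*Complex.I * cauchyTransform (η.map Prod.snd) ((ζ:ℂ)+(y:ℂ)*Complex.I)))⁻¹ +
      ((y:ℂ)*Complex.I*((y:ℂ)*Complex.I) *
        cauchyTransform2 η ((ξ:ℂ)+(y:ℂ)*Complex.I) ((ζ:ℂ)+(y:ℂ)*Complex.I))⁻¹ := by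
    filter_upwards [h0, hsub, ev_a1, ev_a2, ev_b1, ev_b2] with y hy hs e1 e2 e3 e4
    exact alg_main ((y:ℂ)*Complex.I) _ _ _ _ _ _ _ _ _ (yI_ne_zero hy) e1.2.2.2 e3.2.2.2
      e2.2.2.2 e4.2.2.2 hs.2.1 hs.2.2.1 hs.1 hs.2.2.2
  have tL := ((hJCa₁.mul hJCb₁).mul (tB1.inv₀ (by exact_mod_cast ha1.ne'))).add
    ((hJCa₂.mul hJCb₂).mul (tB2.inv₀ (by exact_mod_cast ha2.ne')))
  have tR := ((tM.mul tN).inv₀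
      (mul_ne_zero (by exact_mod_cast hm.ne') (by exact_mod_cast hn.ne'))).add
    (tA.inv₀ (by exact_mod_cast ha.ne'))
  have hkey := tendsto_nhds_unique (tL.congr' hLR) tR
  have hreal : m₁/m*(n₁/n)*a₁⁻¹ + m₂/m*(n₂/n)*a₂⁻¹ = ((m:ℝ)*n)⁻¹ + a⁻¹ := by
    exact_mod_cast hkey
  refine ⟨hpos1, hpos2, ?_⟩
  rw [show (1:ℝ) + m*n/a = m*n*(((m:ℝ)*n)⁻¹ + a⁻¹) by field_simp]
  rw [← hreal]
  field_simp
end
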